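/- arXiv:1609.06396 — 2 statements merged into one kernel-verified Lean document; each statement's English description precedes it below -/
import Mathlib

section
/- Let A be a commutative ring, R_{n−1} = A[x_1,...,x_{n−1}] ⊂ R_n = A[x_1,...,x_n]. For 2 ≤ d ≤ n, the ideal I_{d,n} of R_n satisfies I_{d,n} = I_{d,n−1}·R_n + x_n·(I_{d−1,n−1}·R_n), where I_{d,m} denotes the ideal of squarefree monomials of degree d in the first m variables. -/
open MvPolynomial

/-- The ideal of `A[x_1, …, x_m]` generated by all squarefree monomials of degree `d`. -/
noncomputable def squarefreeIdeal (A : Type*) [CommRing A] (m d : ℕ) :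
    Ideal (MvPolynomial (Fin m) A) :=
  Ideal.span {f | ∃ s : Finset (Fin m), s.card = d ∧ f = ∏ j ∈ s, X j}

lemma exists_finset_map_castSucc {m : ℕ} (s : Finset (Fin (m + 1)))
    (h : Fin.last m ∉ s) : ∃ t : Finset (Fin m), t.map Fin.castSuccEmb = s := by
  refine ⟨s.preimage Fin.castSucc (Fin.castSucc_injective m).injOn, ?_⟩
  rw [Finset.map_eq_image]
  show Finset.image Fin.castSucc _ = s
  rw [Finset.image_preimage]
  ext i
  simp only [Finset.mem_filter, and_iff_left_iff_imp]
  intro hi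
  have : i ≠ Fin.last m := fun hh => h (hh ▸ hi)
  obtain ⟨j, rfl⟩ := Fin.exists_castSucc_eq.mpr this
  exact Set.mem_range_self j

lemma last_not_mem_map_castSucc {m : ℕ} (t : Finset (Fin m)) :
    Fin.last m ∉ t.map Fin.castSuccEmb := by
  simp only [Finset.mem_map, Fin.castSuccEmb_apply]
  rintro ⟨j, _, hj⟩
  exact (Fin.castSucc_lt_last j).ne hj

/-- For `2 ≤ d ≤ n` (here `n = m + 1`), the ideal `I_{d,n}` of `R_n = A[x_1, …, x_n]`
satisfies `I_{d,n} = I_{d,n−1}·R_n + x_n·(I_{d−1,n−1}·R_n)`, where the ideals on the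
right are extended along the inclusion `R_{n−1} ⊆ R_n`. -/
theorem squarefreeIdeal_decomposition (A : Type*) [CommRing A] (m d : ℕ)
    (hd : 2 ≤ d) (hdn : d ≤ m + 1) :
    squarefreeIdeal A (m + 1) d =
      Ideal.map (MvPolynomial.rename (Fin.castSucc : Fin m → Fin (m + 1)))
          (squarefreeIdeal A m d) ⊔
        Ideal.span {X (Fin.last m)} *
          Ideal.map (MvPolynomial.rename (Fin.castSucc : Fin m → Fin (m + 1)))
            (squarefreeIdeal A m (d - 1)) := by
  apply le_antisymm
  · rw [squarefreeIdeal, Ideal.span_le]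
    rintro f ⟨s, hs, rfl⟩
    by_cases h : Fin.last m ∈ s
    · obtain ⟨t, ht⟩ := exists_finset_map_castSucc (s.erase (Fin.last m))
        (Finset.notMem_erase _ _)
    -- f = X last * rename (∏ t)
      have htc : t.card = d - 1 := by
        have h1 : (t.map Fin.castSuccEmb).card = t.card := Finset.card_map _
        rw [ht, Finset.card_erase_of_mem h, hs] at h1
        omega
      have hf : (∏ j ∈ s, X j : MvPolynomial (Fin (m + 1)) A)
          = X (Fin.last m) * rename Fin.castSucc (∏ j ∈ t, X j) := by
        rw [map_prod]
        simp only [rename_X]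
        have : (∏ j ∈ t, X (Fin.castSucc j) : MvPolynomial (Fin (m + 1)) A)
            = ∏ j ∈ t.map Fin.castSuccEmb, X j := by
          rw [Finset.prod_map]; exact Finset.prod_congr rfl fun x _ => rfl
        rw [this, ht, Finset.mul_prod_erase s X h]
      rw [hf]
      refine Ideal.mem_sup_right (Ideal.mul_mem_mul (Ideal.subset_span rfl) ?_)
      exact Ideal.mem_map_of_mem _ (Ideal.subset_span ⟨t, htc, rfl⟩)
    · obtain ⟨t, ht⟩ := exists_finset_map_castSucc s h
      have htc : t.card = d := by rw [← hs, ← ht, Finset.card_map]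
      have hf : (∏ j ∈ s, X j : MvPolynomial (Fin (m + 1)) A)
          = rename Fin.castSucc (∏ j ∈ t, X j) := by
        rw [map_prod]
        simp only [rename_X]
        rw [← ht, Finset.prod_map]
        exact Finset.prod_congr rfl fun x _ => rfl
      rw [hf]
      exact Ideal.mem_sup_left (Ideal.mem_map_of_mem _ (Ideal.subset_span ⟨t, htc, rfl⟩))
  · apply sup_le
    · rw [squarefreeIdeal, Ideal.map_span, Ideal.span_le]
      rintro f ⟨g, ⟨t, ht, rfl⟩, rfl⟩
      apply Ideal.subset_span
      refine ⟨t.map Fin.castSuccEmb, by simp [ht], ?_⟩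
      rw [map_prod, Finset.prod_map]
      simp only [rename_X]
      exact Finset.prod_congr rfl fun x _ => rfl
    · rw [squarefreeIdeal, Ideal.map_span, Ideal.span_mul_span', Ideal.span_le]
      rintro f ⟨a, ha, b, ⟨g, ⟨t, ht, rfl⟩, rfl⟩, rfl⟩
      rcases ha with rfl
      apply Ideal.subset_span
      refine ⟨insert (Fin.last m) (t.map Fin.castSuccEmb), ?_, ?_⟩
      · rw [Finset.card_insert_of_notMem (last_not_mem_map_castSucc t),
          Finset.card_map, ht]
        omega
      · rw [Finset.prod_insert (last_not_mem_map_castSucc t), map_prod]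
        simp only [rename_X]
        rw [Finset.prod_map]
        exact congrArg _ (Finset.prod_congr rfl fun x _ => rfl)
end

section
/- For 1 ≤ d ≤ n and 1 ≤ i ≤ n−d, define the map ∂ on basis tableaux of shape (d,1^i) by ∂([T]) = Σ_{j=0}^{i} (−1)^{i−j} x_{a_j} [T \ a_j], where a_0,...,a_i are the entries of the first column of T from top to bottom and T \ a_j removes the box containing a_j from the first column (sliding lower boxes up). Then ∂∘∂ = 0, i.e., these maps form a complex. -/
open MvPolynomial

variable (A : Type) [CommRing A]

/-- Free `R`-module on tableaux of shape `(d, 1^{c-1})` with entries in `[n]`: a tableau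
is recorded as its first column (of length `c`, top to bottom) together with the rest of
its first row (of length `d-1`, left to right). -/
def TabMod (n d c : ℕ) : Type :=
  ((Fin c → Fin n) × (Fin (d - 1) → Fin n)) →₀ MvPolynomial (Fin n) A

noncomputable instance (n d c : ℕ) : AddCommGroup (TabMod A n d c) :=
  inferInstanceAs (AddCommGroup (_ →₀ _))

noncomputable instance (n d c : ℕ) :
    Module (MvPolynomial (Fin n) A) (TabMod A n d c) :=
  inferInstanceAs (Module _ (_ →₀ _))

/-- The differential `∂_{i+1} : F_{i+1} → F_i`, sending a tableau `T` with first column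
`a_0, …, a_{i+1}` to `Σ_{j=0}^{i+1} (−1)^{i+1−j} x_{a_j} [T \ a_j]`. -/
noncomputable def tabDiff (n d i : ℕ) :
    TabMod A n d (i + 2) →ₗ[MvPolynomial (Fin n) A] TabMod A n d (i + 1) :=
  Finsupp.lsum (MvPolynomial (Fin n) A) fun T =>
    LinearMap.toSpanSingleton (MvPolynomial (Fin n) A) _
      (∑ j : Fin (i + 2),
        ((-1 : MvPolynomial (Fin n) A) ^ (i + 1 - (j : ℕ)) * X (T.1 j)) •
          Finsupp.single (j.removeNth T.1, T.2) (1 : MvPolynomial (Fin n) A))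

noncomputable def tabSingle (n d c : ℕ) (t : (Fin c → Fin n) × (Fin (d - 1) → Fin n))
    (r : MvPolynomial (Fin n) A) : TabMod A n d c := Finsupp.single t r

theorem tabDiff_single' (n d i : ℕ) (T) (b) :
    tabDiff A n d i (tabSingle A n d (i + 2) T b) =
      b • (∑ j : Fin (i + 2),
        ((-1 : MvPolynomial (Fin n) A) ^ (i + 1 - (j : ℕ)) * X (T.1 j)) •
          tabSingle A n d (i + 1) (j.removeNth T.1, T.2) (1 : MvPolynomial (Fin n) A)) := by
  unfold tabDiff
  exact Finsupp.lsum_single _ _ _ _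

lemma succAbove_val' {m : ℕ} (p : Fin (m+1)) (k : Fin m) :
    (p.succAbove k).val = if k.val < p.val then k.val else k.val + 1 := by
  rw [Fin.succAbove]
  split_ifs with h1 h2 h2 <;> simp_all [Fin.lt_def, Fin.castSucc, Fin.castAdd, Fin.castLE]

/-- The pairing involution on pairs of removal indices. -/
def tabInv (m : ℕ) : Fin (m+2) × Fin (m+1) → Fin (m+2) × Fin (m+1) := fun p =>
  if h : ((p.2 : ℕ) < (p.1 : ℕ)) then
    (⟨p.2, by have := p.2.isLt; omega⟩, ⟨(p.1 : ℕ) - 1, by have := p.1.isLt; omega⟩)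
  else (⟨(p.2 : ℕ) + 1, by have := p.2.isLt; omega⟩,
    ⟨(p.1 : ℕ), by have h1 := p.1.isLt; have h2 := p.2.isLt; omega⟩)

lemma tabInv_invol (m : ℕ) (p : Fin (m+2) × Fin (m+1)) : tabInv m (tabInv m p) = p := by
  obtain ⟨j, k⟩ := p
  have hj := j.isLt; have hk := k.isLt
  unfold tabInv
  dsimp only
  split_ifs with h1 h2 h2 <;> dsimp only at h2 ⊢ <;> rw [Prod.mk.injEq] <;> constructor <;>
    apply Fin.ext <;> simp <;> omega

lemma tabInv_ne (m : ℕ) (p : Fin (m+2) × Fin (m+1)) : tabInv m p ≠ p := by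
  obtain ⟨j, k⟩ := p
  unfold tabInv
  dsimp only
  split_ifs with h1 <;> intro hc <;> rw [Prod.mk.injEq] at hc <;>
    obtain ⟨hc1, hc2⟩ := hc
  · exact absurd (congrArg Fin.val hc1) (by simp; omega)
  · exact absurd (congrArg Fin.val hc1) (by simp; omega)

lemma succAbove_comp (m : ℕ) (j : Fin (m+2)) (k : Fin (m+1)) (t : Fin m) :
    j.succAbove (k.succAbove t) =
      (tabInv m (j, k)).1.succAbove ((tabInv m (j, k)).2.succAbove t) := by
  have hj := j.isLt; have hk := k.isLt; have ht := t.isLt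
  apply Fin.ext
  unfold tabInv
  dsimp only
  split_ifs with h1
  · rw [succAbove_val', succAbove_val', succAbove_val', succAbove_val']
    simp only []
    split_ifs <;> simp_all <;> omega
  · rw [succAbove_val', succAbove_val', succAbove_val', succAbove_val']
    simp only []
    split_ifs <;> simp_all <;> omega

lemma tabInv_fst (m : ℕ) (j : Fin (m+2)) (k : Fin (m+1)) :
    (tabInv m (j, k)).1 = j.succAbove k := by
  have hj := j.isLt; have hk := k.isLt
  apply Fin.ext
  rw [succAbove_val']
  unfold tabInv
  dsimp only
  split_ifs <;> simp <;> omega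

lemma tabInv_succAbove (m : ℕ) (j : Fin (m+2)) (k : Fin (m+1)) :
    (tabInv m (j, k)).1.succAbove (tabInv m (j, k)).2 = j := by
  have hj := j.isLt; have hk := k.isLt
  apply Fin.ext
  unfold tabInv
  dsimp only
  split_ifs with h1 <;> rw [succAbove_val'] <;> dsimp only <;> split_ifs <;> omega

lemma tabInv_fst_val (m : ℕ) (j : Fin (m+2)) (k : Fin (m+1)) :
    ((tabInv m (j, k)).1 : ℕ) = if (k:ℕ) < (j:ℕ) then (k:ℕ) else (k:ℕ) + 1 := by
  unfold tabInv; split_ifs <;> rfl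

lemma tabInv_snd_val (m : ℕ) (j : Fin (m+2)) (k : Fin (m+1)) :
    ((tabInv m (j, k)).2 : ℕ) = if (k:ℕ) < (j:ℕ) then (j:ℕ) - 1 else (j:ℕ) := by
  unfold tabInv; split_ifs <;> rfl

/-- The maps `∂` form a complex: `∂_i ∘ ∂_{i+1} = 0` (here stated for `∂_{i+1} ∘ ∂_{i+2}`
for all `i ≥ 0`, which covers all composable pairs). -/
theorem tabDiff_comp_tabDiff (n d i : ℕ) (hd : 1 ≤ d) (hdn : d ≤ n)
    (hi : i + 2 ≤ n - d) :
    (tabDiff A n d i).comp (tabDiff A n d (i + 1)) = 0 := by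
  apply Finsupp.lhom_ext
  intro T b
  show tabDiff A n d i (tabDiff A n d (i + 1) (tabSingle A n d (i + 1 + 2) T b)) = 0
  refine Eq.trans (congrArg (tabDiff A n d i) (tabDiff_single' A n d (i+1) T b)) ?_
  simp only [map_smul, map_sum, tabDiff_single', smul_smul, one_mul, one_smul, Finset.smul_sum]
  rw [← Finset.sum_product']
  refine Finset.sum_ninvolution (tabInv (i+1)) ?_
    (fun p _ => tabInv_ne (i+1) p)
    (fun p => Finset.mem_product.2 ⟨Finset.mem_univ _, Finset.mem_univ _⟩)
    (tabInv_invol (i+1))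
  rintro ⟨j, k⟩
  dsimp only
  have hfun : k.removeNth (j.removeNth T.1) =
      ((tabInv (i+1) (j,k)).2).removeNth (((tabInv (i+1) (j,k)).1).removeNth T.1) := by
    funext t
    exact congrArg T.1 (succAbove_comp (i+1) j k t)
  rw [← hfun, ← add_smul]
  have hx : (tabInv (i+1) (j,k)).1.removeNth T.1 (tabInv (i+1) (j,k)).2 = T.1 j :=
    congrArg T.1 (tabInv_succAbove (i+1) j k)
  have hy : T.1 (tabInv (i+1) (j,k)).1 = T.1 (j.succAbove k) :=
    congrArg T.1 (tabInv_fst (i+1) j k)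
  have hz : j.removeNth T.1 k = T.1 (j.succAbove k) := rfl
  rw [hx, hy, hz, tabInv_fst_val, tabInv_snd_val]
  have hj := j.isLt; have hk := k.isLt
  rcases Nat.lt_or_ge (k:ℕ) (j:ℕ) with h | h
  · rw [if_pos h, if_pos h]
    have e1 : i + 1 - ((j:ℕ) - 1) = i + 1 + 1 - (j:ℕ) := by omega
    have e2 : i + 1 + 1 - (k:ℕ) = (i + 1 - (k:ℕ)) + 1 := by omega
    rw [e1, e2, pow_succ]
    exact smul_eq_zero_of_left (by ring) _
  · rw [if_neg (Nat.not_lt.2 h), if_neg (Nat.not_lt.2 h)]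
    have e1 : i + 1 + 1 - ((k:ℕ) + 1) = i + 1 - (k:ℕ) := by omega
    have e2 : i + 1 + 1 - (j:ℕ) = (i + 1 - (j:ℕ)) + 1 := by omega
    rw [e1, e2, pow_succ]
    exact smul_eq_zero_of_left (by ring) _
end
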